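/- With a(x,y) and d^c(x,y) = 2 log(1 + c·a(x,y)) defined as for d¹ (π injective, h positive), for every c > 0 the function d^c is a quasi-distance: there exists A ≥ 1 such that d^c(x,y) ≤ A(d^c(x,z) + d^c(z,y)) for all x, y, z. -/

import Mathlib

lemma log_concave_aux {c t : ℝ} (hc : 0 < c) (hc1 : c ≤ 1) (ht : 0 ≤ t) :
    c * Real.log (1 + t) ≤ Real.log (1 + c * t) := by
  have h1 : (1:ℝ) ∈ Set.Ioi (0:ℝ) := by norm_num
  have h2 : (1 + t) ∈ Set.Ioi (0:ℝ) := by simp; linarith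
  have := strictConcaveOn_log_Ioi.concaveOn.2 h1 h2 (sub_nonneg.mpr hc1) hc.le
    (by ring)
  simp only [smul_eq_mul, Real.log_one, mul_zero, zero_add, mul_one] at this
  have he : 1 - c + c * (1 + t) = 1 + c * t := by ring
  rw [he] at this
  linarith

theorem stmt_6 {U E : Type*} [MetricSpace E] (π : U → E) (h : U → ℝ)
    (hinj : Function.Injective π) (hpos : ∀ x, 0 < h x)
    (c : ℝ) (hc : 0 < c) (a dc : U → U → ℝ)
    (ha : ∀ x y, a x y =
      (dist (π x) (π y) + max (h x) (h y)) / Real.sqrt (h x * h y) - 1)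
    (hdc : ∀ x y, dc x y = 2 * Real.log (1 + c * a x y)) :
    ∃ A : ℝ, 1 ≤ A ∧ ∀ x y z, dc x y ≤ A * (dc x z + dc z y) := by
  have hs : ∀ x y : U, 0 < Real.sqrt (h x * h y) := fun x y =>
    Real.sqrt_pos.mpr (mul_pos (hpos x) (hpos y))
  have key : ∀ x y, 1 + a x y
      = (dist (π x) (π y) + max (h x) (h y)) / Real.sqrt (h x * h y) := by
    intro x y; rw [ha]; ring
  have hanneg : ∀ x y, 0 ≤ a x y := by
    intro x y
    have h1 : Real.sqrt (h x * h y) ≤ max (h x) (h y) := by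
      rw [show max (h x) (h y) = Real.sqrt (max (h x) (h y) * max (h x) (h y)) from
        (Real.sqrt_mul_self (le_trans (hpos x).le (le_max_left _ _))).symm]
      exact Real.sqrt_le_sqrt (mul_le_mul (le_max_left _ _) (le_max_right _ _)
        (hpos y).le (le_trans (hpos x).le (le_max_left _ _)))
    rw [ha, sub_nonneg, le_div_iff₀ (hs x y), one_mul]
    have := dist_nonneg (x := π x) (y := π y)
    linarith
  have hmul : ∀ x y z, 1 + a x y ≤ (1 + a x z) * (1 + a z y) := by
    intro x y z
    rw [key, key, key, div_mul_div_comm]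
    have hden : Real.sqrt (h x * h z) * Real.sqrt (h z * h y)
        = h z * Real.sqrt (h x * h y) := by
      rw [← Real.sqrt_mul (mul_pos (hpos x) (hpos z)).le,
        show h x * h z * (h z * h y) = h z * h z * (h x * h y) by ring,
        Real.sqrt_mul (mul_self_nonneg _), Real.sqrt_mul_self (hpos z).le]
    rw [hden, div_le_div_iff₀ (hs x y) (mul_pos (hpos z) (hs x y))]
    have hcore : (dist (π x) (π y) + max (h x) (h y)) * h z ≤
        (dist (π x) (π z) + max (h x) (h z)) * (dist (π z) (π y) + max (h z) (h y)) := by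
      have htri : dist (π x) (π y) ≤ dist (π x) (π z) + dist (π z) (π y) :=
        dist_triangle _ _ _
      have hp : 0 ≤ dist (π x) (π z) := dist_nonneg
      have hq : 0 ≤ dist (π z) (π y) := dist_nonneg
      have h1 : h x ≤ max (h x) (h z) := le_max_left _ _
      have h2 : h z ≤ max (h x) (h z) := le_max_right _ _
      have h3 : h z ≤ max (h z) (h y) := le_max_left _ _
      have h4 : h y ≤ max (h z) (h y) := le_max_right _ _
      rcases le_total (h x) (h y) with hxy | hxy
      · rw [max_eq_right hxy]
        nlinarith [hpos x, hpos y, hpos z, mul_le_mul h3 h4 (hpos y).le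
          (le_trans (hpos z).le h3)]
      · rw [max_eq_left hxy]
        nlinarith [hpos x, hpos y, hpos z, mul_le_mul h1 h2 (hpos z).le
          (le_trans (hpos x).le h1)]
    calc (dist (π x) (π y) + max (h x) (h y)) * (h z * Real.sqrt (h x * h y))
        = ((dist (π x) (π y) + max (h x) (h y)) * h z) * Real.sqrt (h x * h y) := by ring
      _ ≤ ((dist (π x) (π z) + max (h x) (h z)) * (dist (π z) (π y) + max (h z) (h y)))
          * Real.sqrt (h x * h y) :=
        mul_le_mul_of_nonneg_right hcore (hs x y).le
  refine ⟨max 1 c⁻¹, le_max_left _ _, fun x y z => ?_⟩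
  have p1 : (1:ℝ) ≤ 1 + c * a x z := by nlinarith [hanneg x z]
  have p2 : (1:ℝ) ≤ 1 + c * a z y := by nlinarith [hanneg z y]
  have p3 : (1:ℝ) ≤ 1 + c * a x y := by nlinarith [hanneg x y]
  have l1 : 0 ≤ Real.log (1 + c * a x z) := Real.log_nonneg p1
  have l2 : 0 ≤ Real.log (1 + c * a z y) := Real.log_nonneg p2
  have hsum : 0 ≤ dc x z + dc z y := by
    rw [hdc, hdc]; linarith
  rcases le_or_gt 1 c with hc1 | hc1
  · -- c ≥ 1 : A = 1 works
    have hkey : 1 + c * a x y ≤ (1 + c * a x z) * (1 + c * a z y) := by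
      nlinarith [mul_le_mul_of_nonneg_left (hmul x y z) hc.le,
        mul_nonneg (mul_nonneg (mul_nonneg (sub_nonneg.mpr hc1) hc.le) (hanneg x z)) (hanneg z y)]
    have hlog : Real.log (1 + c * a x y)
        ≤ Real.log (1 + c * a x z) + Real.log (1 + c * a z y) := by
      rw [← Real.log_mul (by linarith) (by linarith)]
      exact Real.log_le_log (by linarith) hkey
    have : dc x y ≤ dc x z + dc z y := by
      rw [hdc, hdc, hdc]; linarith
    calc dc x y ≤ dc x z + dc z y := this
      _ = 1 * (dc x z + dc z y) := (one_mul _).symm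
      _ ≤ max 1 c⁻¹ * (dc x z + dc z y) :=
        mul_le_mul_of_nonneg_right (le_max_left _ _) hsum
  · -- c < 1 : A = 1/c works
    have hstep1 : Real.log (1 + c * a x y) ≤ Real.log (1 + a x y) := by
      apply Real.log_le_log (by linarith)
      nlinarith [hanneg x y]
    have hstep2 : Real.log (1 + a x y)
        ≤ Real.log (1 + a x z) + Real.log (1 + a z y) := by
      rw [← Real.log_mul (by nlinarith [hanneg x z]) (by nlinarith [hanneg z y])]
      exact Real.log_le_log (by nlinarith [hanneg x y]) (hmul x y z)
    have hstep3 : c * Real.log (1 + a x z) ≤ Real.log (1 + c * a x z) :=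
      log_concave_aux hc hc1.le (hanneg x z)
    have hstep4 : c * Real.log (1 + a z y) ≤ Real.log (1 + c * a z y) :=
      log_concave_aux hc hc1.le (hanneg z y)
    have hA : max 1 c⁻¹ = c⁻¹ := max_eq_right (one_le_inv_iff₀.mpr ⟨hc, hc1.le⟩)
    rw [hA, hdc, hdc, hdc]
    have hcinv : 0 < c⁻¹ := inv_pos.mpr hc
    have : c * (2 * Real.log (1 + c * a x y))
        ≤ 2 * Real.log (1 + c * a x z) + 2 * Real.log (1 + c * a z y) := by
      have m1 := mul_le_mul_of_nonneg_left hstep1 hc.le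
      have m2 := mul_le_mul_of_nonneg_left hstep2 hc.le
      linarith
    calc 2 * Real.log (1 + c * a x y)
        = c⁻¹ * (c * (2 * Real.log (1 + c * a x y))) := by
          field_simp
      _ ≤ c⁻¹ * (2 * Real.log (1 + c * a x z) + 2 * Real.log (1 + c * a z y)) :=
          mul_le_mul_of_nonneg_left this hcinv.le
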